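/- Let K ≥ 1 be an integer, p₁,…,p_K positive real numbers, and L*, L integers with 1 ≤ L* ≤ L ≤ K. Let δ₁,…,δ_K be real numbers with δ_i ≥ 2 for i ≤ L and δ_i ≥ 1 for L < i ≤ K, let n ≥ 0 be a real number, and let ν₁,…,ν_K be real numbers satisfying Σ_{i=1}^{K} p_i ν_i > n·Σ_{i=1}^{K} p_i δ_i. Then 2·Σ_{i=1}^{L*} p_i ν_i² + Σ_{i=L*+1}^{K} p_i ν_i² > 4n²·Σ_{i=1}^{L} p_i. -/
import Mathlib


open Finset

/-- Weighted Cauchy–Schwarz: `(∑ p ν)² ≤ (∑ p ν²)(∑ p)` for nonnegative weights `p`. -/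
lemma weighted_cs (s : Finset ℕ) (p ν : ℕ → ℝ) (hp : ∀ i ∈ s, 0 ≤ p i) :
    (∑ i ∈ s, p i * ν i) ^ 2 ≤ (∑ i ∈ s, p i * ν i ^ 2) * ∑ i ∈ s, p i :=
  sum_sq_le_sum_mul_sum_of_sq_eq_mul s
    (fun i hi => mul_nonneg (hp i hi) (sq_nonneg _)) hp (fun i _ => by ring)


lemma aux_le_of_sq_le_sq {a b : ℝ} (hb : 0 ≤ b) (h : a ^ 2 ≤ b ^ 2) : a ≤ b := by
  nlinarith [sq_nonneg (a - b), sq_nonneg (a + b)]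

lemma aux_sq_lt_sq {a b : ℝ} (ha : 0 ≤ a) (h : a < b) : a ^ 2 < b ^ 2 := by nlinarith

lemma aux_amgm (T1 T2 P1 P2 S1 S2 : ℝ)
    (h4 : S1 ^ 2 * S2 ^ 2 ≤ T1 * P1 * (T2 * P2)) :
    (2 * (S1 * S2)) ^ 2 ≤ (2 * T1 * P2 + T2 * P1 / 2) ^ 2 := by
  nlinarith [sq_nonneg (2 * T1 * P2 - T2 * P1 / 2)]

lemma aux_combine (T1 T2 P1 P2 S1 S2 : ℝ)
    (hcs1 : S1 ^ 2 ≤ T1 * P1) (hcs2 : S2 ^ 2 ≤ T2 * P2)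
    (hcross : 2 * (S1 * S2) ≤ 2 * T1 * P2 + T2 * P1 / 2) :
    (S1 + S2) ^ 2 ≤ (2 * T1 + T2) * (P1 / 2 + P2) := by nlinarith

lemma aux_key (SL SU P1 P2 : ℝ) (hP : P1 + P2 = SL + SU)
    (h1 : 0 ≤ SL) (h2 : 0 ≤ P1) : 4 * SL * (P1 / 2 + P2) ≤ (2 * SL + SU) ^ 2 := by
  nlinarith [mul_nonneg h1 h2, sq_nonneg SU]

/-- Let `K ≥ 1`, `p₁,…,p_K > 0`, `1 ≤ L* ≤ L ≤ K`,
`δ_i ≥ 2` for `i ≤ L`, `δ_i ≥ 1` for `L < i ≤ K`, `n ≥ 0`, and suppose the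
Noether–Fano inequality `∑_{i=1}^K p_i ν_i > n·∑_{i=1}^K p_i δ_i` holds.
Then `2·∑_{i=1}^{L*} p_i ν_i² + ∑_{i=L*+1}^{K} p_i ν_i² > 4n²·∑_{i=1}^{L} p_i`. -/
theorem stmt_6 (K Lstar L : ℕ) (hK : 1 ≤ K) (hLstar : 1 ≤ Lstar)
    (hLsL : Lstar ≤ L) (hLK : L ≤ K)
    (p δ ν : ℕ → ℝ)
    (hp : ∀ i ∈ Icc 1 K, 0 < p i)
    (hδl : ∀ i ∈ Icc 1 L, 2 ≤ δ i)
    (hδu : ∀ i ∈ Icc (L + 1) K, 1 ≤ δ i)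
    (n : ℝ) (hn : 0 ≤ n)
    (hNF : ∑ i ∈ Icc 1 K, p i * ν i > n * ∑ i ∈ Icc 1 K, p i * δ i) :
    2 * ∑ i ∈ Icc 1 Lstar, p i * ν i ^ 2 +
      ∑ i ∈ Icc (Lstar + 1) K, p i * ν i ^ 2 >
      4 * n ^ 2 * ∑ i ∈ Icc 1 L, p i := by
  -- splitting sums over `Icc 1 K`
  have split : ∀ (f : ℕ → ℝ) (m : ℕ), m ≤ K →
      ∑ i ∈ Icc 1 K, f i = ∑ i ∈ Icc 1 m, f i + ∑ i ∈ Icc (m + 1) K, f i := by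
    intro f m hm
    rw [show Icc 1 K = Ioc 0 K from Finset.Icc_add_one_left_eq_Ioc 0 K,
        show Icc 1 m = Ioc 0 m from Finset.Icc_add_one_left_eq_Ioc 0 m,
        Finset.Icc_add_one_left_eq_Ioc]
    exact (Finset.sum_Ioc_consecutive f (Nat.zero_le m) hm).symm
  have hLsK : Lstar ≤ K := le_trans hLsL hLK
  -- membership facts
  have hsub1 : ∀ i ∈ Icc 1 Lstar, i ∈ Icc 1 K := fun i hi => by
    simp only [mem_Icc] at *; omega
  have hsub2 : ∀ i ∈ Icc (Lstar + 1) K, i ∈ Icc 1 K := fun i hi => by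
    simp only [mem_Icc] at *; omega
  have hsub3 : ∀ i ∈ Icc 1 L, i ∈ Icc 1 K := fun i hi => by
    simp only [mem_Icc] at *; omega
  have hsub4 : ∀ i ∈ Icc (L + 1) K, i ∈ Icc 1 K := fun i hi => by
    simp only [mem_Icc] at *; omega
  set S1 := ∑ i ∈ Icc 1 Lstar, p i * ν i with hS1
  set S2 := ∑ i ∈ Icc (Lstar + 1) K, p i * ν i with hS2
  set T1 := ∑ i ∈ Icc 1 Lstar, p i * ν i ^ 2 with hT1
  set T2 := ∑ i ∈ Icc (Lstar + 1) K, p i * ν i ^ 2 with hT2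
  set P1 := ∑ i ∈ Icc 1 Lstar, p i with hP1
  set P2 := ∑ i ∈ Icc (Lstar + 1) K, p i with hP2
  set SL := ∑ i ∈ Icc 1 L, p i with hSL
  set SU := ∑ i ∈ Icc (L + 1) K, p i with hSU
  -- positivity facts
  have hP1pos : 0 < P1 :=
    Finset.sum_pos (fun i hi => hp i (hsub1 i hi)) ⟨1, by simp [hLstar]⟩
  have hP2nn : 0 ≤ P2 :=
    Finset.sum_nonneg (fun i hi => (hp i (hsub2 i hi)).le)
  have hSLpos : 0 < SL :=
    Finset.sum_pos (fun i hi => hp i (hsub3 i hi)) ⟨1, by simp; omega⟩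
  have hSUnn : 0 ≤ SU :=
    Finset.sum_nonneg (fun i hi => (hp i (hsub4 i hi)).le)
  have hT1nn : 0 ≤ T1 :=
    Finset.sum_nonneg (fun i hi => mul_nonneg (hp i (hsub1 i hi)).le (sq_nonneg _))
  have hT2nn : 0 ≤ T2 :=
    Finset.sum_nonneg (fun i hi => mul_nonneg (hp i (hsub2 i hi)).le (sq_nonneg _))
  -- total sums
  have hPsum : P1 + P2 = SL + SU := by
    rw [hP1, hP2, hSL, hSU, ← split p Lstar hLsK, ← split p L hLK]
  -- Cauchy–Schwarz on the two pieces
  have hcs1 : S1 ^ 2 ≤ T1 * P1 :=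
    weighted_cs _ p ν (fun i hi => (hp i (hsub1 i hi)).le)
  have hcs2 : S2 ^ 2 ≤ T2 * P2 :=
    weighted_cs _ p ν (fun i hi => (hp i (hsub2 i hi)).le)
  -- Noether–Fano lower bound
  have hΔ : 2 * SL + SU ≤ ∑ i ∈ Icc 1 K, p i * δ i := by
    rw [split (fun i => p i * δ i) L hLK]
    have h1 : 2 * SL ≤ ∑ i ∈ Icc 1 L, p i * δ i := by
      rw [hSL, Finset.mul_sum]
      exact Finset.sum_le_sum fun i hi => by
        have := hp i (hsub3 i hi); have := hδl i hi; nlinarith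
    have h2 : SU ≤ ∑ i ∈ Icc (L + 1) K, p i * δ i := by
      rw [hSU]
      exact Finset.sum_le_sum fun i hi => by
        have := hp i (hsub4 i hi); have := hδu i hi; nlinarith
    linarith
  have hS12 : n * (2 * SL + SU) < S1 + S2 := by
    have := hNF
    rw [split (fun i => p i * ν i) Lstar hLsK] at this
    have h' : n * (2 * SL + SU) ≤ n * ∑ i ∈ Icc 1 K, p i * δ i :=
      mul_le_mul_of_nonneg_left hΔ hn
    linarith
  have hnn : 0 ≤ n * (2 * SL + SU) := mul_nonneg hn (by linarith)
  -- square the Noether–Fano inequality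
  have hsq : (n * (2 * SL + SU)) ^ 2 < (S1 + S2) ^ 2 := aux_sq_lt_sq hnn hS12
  -- combined Cauchy–Schwarz: (S1+S2)² ≤ (2T1+T2)(P1/2+P2)
  have hXnn : 0 ≤ 2 * T1 * P2 + T2 * P1 / 2 := by
    have h1 : 0 ≤ T1 * P2 := mul_nonneg hT1nn hP2nn
    have h2 : 0 ≤ T2 * P1 := mul_nonneg hT2nn hP1pos.le
    linarith
  have h4 : S1 ^ 2 * S2 ^ 2 ≤ T1 * P1 * (T2 * P2) :=
    mul_le_mul hcs1 hcs2 (sq_nonneg S2) (mul_nonneg hT1nn hP1pos.le)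
  have hXsq : (2 * (S1 * S2)) ^ 2 ≤ (2 * T1 * P2 + T2 * P1 / 2) ^ 2 :=
    aux_amgm T1 T2 P1 P2 S1 S2 h4
  have hcross : 2 * (S1 * S2) ≤ 2 * T1 * P2 + T2 * P1 / 2 :=
    aux_le_of_sq_le_sq hXnn hXsq
  have hcs : (S1 + S2) ^ 2 ≤ (2 * T1 + T2) * (P1 / 2 + P2) :=
    aux_combine T1 T2 P1 P2 S1 S2 hcs1 hcs2 hcross
  -- final comparison
  have hD : 0 < P1 / 2 + P2 := by linarith
  have hfin : 4 * n ^ 2 * SL * (P1 / 2 + P2) ≤ (n * (2 * SL + SU)) ^ 2 := by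
    have key : 4 * SL * (P1 / 2 + P2) ≤ (2 * SL + SU) ^ 2 :=
      aux_key SL SU P1 P2 hPsum hSLpos.le hP1pos.le
    have := mul_le_mul_of_nonneg_left key (sq_nonneg n)
    calc 4 * n ^ 2 * SL * (P1 / 2 + P2) = n ^ 2 * (4 * SL * (P1 / 2 + P2)) := by ring
      _ ≤ n ^ 2 * (2 * SL + SU) ^ 2 := this
      _ = (n * (2 * SL + SU)) ^ 2 := by ring
  have : 4 * n ^ 2 * SL * (P1 / 2 + P2) < (2 * T1 + T2) * (P1 / 2 + P2) := by
    calc 4 * n ^ 2 * SL * (P1 / 2 + P2) ≤ (n * (2 * SL + SU)) ^ 2 := hfin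
      _ < (S1 + S2) ^ 2 := hsq
      _ ≤ (2 * T1 + T2) * (P1 / 2 + P2) := hcs
  exact lt_of_mul_lt_mul_right this hD.le
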